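/- For an arbitrary q-state Potts model with couplings {J_{ij}} on a finite site set, the two-point correlation satisfies the comparison-to-Ising bound ⟨(q δ_{σ_i,σ_j} − 1)/(q−1)⟩ ≤ (q/2) ⟨ε_i ε_j⟩_{Ising,{|J|/2}}, where the right-hand side is the two-point function of the ferromagnetic Ising model with couplings {(1/2)|J_{ij}|}. -/

import Mathlib

set_option linter.unusedSectionVars false
set_option linter.unreachableTactic false
set_option linter.unusedTactic false
set_option maxHeartbeats 1000000

open Finset

/-- Ising spin value attached to a Boolean. -/
def isingSpin (b : Bool) : ℝ := if b then 1 else -1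

section Auxiliary

lemma isingSpin_cases (b : Bool) : isingSpin b = 1 ∨ isingSpin b = -1 := by
  cases b <;> simp [isingSpin]

lemma isingSpin_mul_self (b : Bool) : isingSpin b * isingSpin b = 1 := by
  cases b <;> norm_num [isingSpin]

lemma isingSpin_beq (a b : Bool) : isingSpin (a == b) = isingSpin a * isingSpin b := by
  cases a <;> cases b <;> norm_num [isingSpin]

/-- Sum over all Boolean configurations of a spin monomial is nonnegative. -/
lemma monom_nonneg {V : Type*} [Fintype V] [DecidableEq V] (m : V → ℕ) :
    0 ≤ ∑ ε : V → Bool, ∏ x, (isingSpin (ε x)) ^ m x := by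
  rw [← Fintype.prod_sum (fun x (b : Bool) => (isingSpin b) ^ m x)]
  apply Finset.prod_nonneg
  intro x _
  have : ∑ b : Bool, isingSpin b ^ m x = 1 ^ m x + (-1 : ℝ) ^ m x := by
    simp [isingSpin]
  rw [this]
  rcases Nat.even_or_odd (m x) with h | h
  · rw [h.neg_one_pow]; norm_num
  · rw [h.neg_one_pow]; norm_num

/-- Turning indicator exponents into a pair of spins. -/
lemma prod_ind2 {V : Type*} [Fintype V] [DecidableEq V] (i j : V) (ε : V → Bool) :
    ∏ x, isingSpin (ε x) ^ ((if i = x then 1 else 0) + (if j = x then 1 else 0)) =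
      isingSpin (ε i) * isingSpin (ε j) := by
  simp only [pow_add]
  rw [Finset.prod_mul_distrib]
  congr 1 <;>
  · simp only [pow_ite, pow_one, pow_zero]
    simp [Finset.prod_ite_eq]


section
variable {V : Type*} [Fintype V] [DecidableEq V]

lemma exp_coupling (a t : ℝ) (ht : t = 1 ∨ t = -1) :
    Real.exp (a * t) = Real.sinh a * t + Real.cosh a := by
  rcases ht with h | h <;> subst h
  · rw [mul_one, mul_one, add_comm, Real.cosh_add_sinh]
  · rw [mul_neg_one, mul_neg_one, ← Real.cosh_sub_sinh]; ring

/-- Generalized first Griffiths inequality, induction form. -/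
lemma gks1_aux (P : Finset (V × V)) (M : V × V → ℝ) (hM : ∀ p ∈ P, 0 ≤ M p)
    (m : V → ℕ) :
    0 ≤ ∑ ε : V → Bool, (∏ x, isingSpin (ε x) ^ m x) *
        ∏ p ∈ P, Real.exp (M p * (isingSpin (ε p.1) * isingSpin (ε p.2))) := by
  classical
  induction P using Finset.induction generalizing m with
  | empty => simpa using monom_nonneg m
  | @insert p P hp IH =>
    have hMp : 0 ≤ M p := hM p (Finset.mem_insert_self _ _)
    have hrest : ∀ q ∈ P, 0 ≤ M q := fun q hq => hM q (Finset.mem_insert_of_mem hq)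
    have key : ∀ ε : V → Bool,
        (∏ x, isingSpin (ε x) ^ m x) *
          ∏ r ∈ insert p P, Real.exp (M r * (isingSpin (ε r.1) * isingSpin (ε r.2)))
        = Real.sinh (M p) * ((∏ x, isingSpin (ε x) ^
              (m x + ((if p.1 = x then 1 else 0) + (if p.2 = x then 1 else 0)))) *
            ∏ r ∈ P, Real.exp (M r * (isingSpin (ε r.1) * isingSpin (ε r.2))))
          + Real.cosh (M p) * ((∏ x, isingSpin (ε x) ^ m x) *
            ∏ r ∈ P, Real.exp (M r * (isingSpin (ε r.1) * isingSpin (ε r.2)))) := by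
      intro ε
      rw [Finset.prod_insert hp]
      rw [exp_coupling _ _ (by rcases isingSpin_cases (ε p.1) with h1|h1 <;>
            rcases isingSpin_cases (ε p.2) with h2|h2 <;> rw [h1,h2] <;> norm_num)]
      have hsplit : (∏ x, isingSpin (ε x) ^
            (m x + ((if p.1 = x then 1 else 0) + (if p.2 = x then 1 else 0))))
          = (∏ x, isingSpin (ε x) ^ m x) * (isingSpin (ε p.1) * isingSpin (ε p.2)) := by
        simp only [pow_add]
        rw [Finset.prod_mul_distrib, Finset.prod_mul_distrib]
        congr 2 <;>
        · simp only [pow_ite, pow_one, pow_zero]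
          simp [Finset.prod_ite_eq]
      rw [hsplit]; ring
    rw [Finset.sum_congr rfl fun ε _ => key ε]
    rw [Finset.sum_add_distrib, ← Finset.mul_sum, ← Finset.mul_sum]
    have h1 := IH hrest (fun x => m x + ((if p.1 = x then 1 else 0) + (if p.2 = x then 1 else 0)))
    have h2 := IH hrest m
    have hs : 0 ≤ Real.sinh (M p) := by rw [← Real.sinh_zero]; exact Real.sinh_le_sinh.mpr hMp
    positivity

/-- First Griffiths inequality with a spin-monomial insertion. -/
lemma gks1 (M : V → V → ℝ) (hM : ∀ x y, 0 ≤ M x y) (m : V → ℕ) :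
    0 ≤ ∑ ε : V → Bool, (∏ x, isingSpin (ε x) ^ m x) *
        Real.exp (∑ x, ∑ y, M x y * isingSpin (ε x) * isingSpin (ε y)) := by
  have key : ∀ ε : V → Bool,
      Real.exp (∑ x, ∑ y, M x y * isingSpin (ε x) * isingSpin (ε y))
        = ∏ p ∈ (univ ×ˢ univ : Finset (V × V)),
            Real.exp (M p.1 p.2 * (isingSpin (ε p.1) * isingSpin (ε p.2))) := by
    intro ε
    rw [← Real.exp_sum, Finset.sum_product]
    simp only [mul_assoc]
  rw [Finset.sum_congr rfl fun ε _ => by rw [key ε]]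
  exact gks1_aux _ _ (fun p _ => hM p.1 p.2) m

/-- two-point function of a ferromagnetic model is nonneg -/
lemma gks1' (M : V → V → ℝ) (hM : ∀ x y, 0 ≤ M x y) (i j : V) :
    0 ≤ ∑ ε : V → Bool, isingSpin (ε i) * isingSpin (ε j) *
        Real.exp (∑ x, ∑ y, M x y * isingSpin (ε x) * isingSpin (ε y)) := by
  have := gks1 M hM (fun x => (if i = x then 1 else 0) + (if j = x then 1 else 0))
  rw [Finset.sum_congr rfl fun ε _ => by rw [prod_ind2 i j ε]] at this
  exact this

/-- Griffiths comparison inequality for two-point functions. -/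
lemma griffiths_comparison (K K' : V → V → ℝ) (h : ∀ x y, |K x y| ≤ K' x y) (i j : V) :
    (∑ ε : V → Bool, isingSpin (ε i) * isingSpin (ε j) *
        Real.exp (∑ x, ∑ y, K x y * isingSpin (ε x) * isingSpin (ε y))) *
      (∑ ε : V → Bool, Real.exp (∑ x, ∑ y, K' x y * isingSpin (ε x) * isingSpin (ε y)))
    ≤ (∑ ε : V → Bool, isingSpin (ε i) * isingSpin (ε j) *
        Real.exp (∑ x, ∑ y, K' x y * isingSpin (ε x) * isingSpin (ε y))) *
      (∑ ε : V → Bool, Real.exp (∑ x, ∑ y, K x y * isingSpin (ε x) * isingSpin (ε y))) := by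
  rw [← sub_nonneg]
  have expand : (∑ ε : V → Bool, isingSpin (ε i) * isingSpin (ε j) *
        Real.exp (∑ x, ∑ y, K' x y * isingSpin (ε x) * isingSpin (ε y))) *
      (∑ ε : V → Bool, Real.exp (∑ x, ∑ y, K x y * isingSpin (ε x) * isingSpin (ε y)))
    - (∑ ε : V → Bool, isingSpin (ε i) * isingSpin (ε j) *
        Real.exp (∑ x, ∑ y, K x y * isingSpin (ε x) * isingSpin (ε y))) *
      (∑ ε : V → Bool, Real.exp (∑ x, ∑ y, K' x y * isingSpin (ε x) * isingSpin (ε y)))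
    = ∑ ε : V → Bool, ∑ δ : V → Bool,
        (isingSpin (ε i) * isingSpin (ε j) - isingSpin (δ i) * isingSpin (δ j)) *
          Real.exp ((∑ x, ∑ y, K' x y * isingSpin (ε x) * isingSpin (ε y)) +
            (∑ x, ∑ y, K x y * isingSpin (δ x) * isingSpin (δ y))) := by
    rw [Finset.sum_mul_sum, Finset.sum_mul_sum]
    have swap : (∑ ε : V → Bool, ∑ δ : V → Bool,
        isingSpin (ε i) * isingSpin (ε j) *
          Real.exp (∑ x, ∑ y, K x y * isingSpin (ε x) * isingSpin (ε y)) *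
          Real.exp (∑ x, ∑ y, K' x y * isingSpin (δ x) * isingSpin (δ y)))
      = ∑ ε : V → Bool, ∑ δ : V → Bool,
        isingSpin (δ i) * isingSpin (δ j) *
          Real.exp (∑ x, ∑ y, K x y * isingSpin (δ x) * isingSpin (δ y)) *
          Real.exp (∑ x, ∑ y, K' x y * isingSpin (ε x) * isingSpin (ε y)) :=
      Finset.sum_comm
    rw [swap]
    rw [← Finset.sum_sub_distrib]
    apply Finset.sum_congr rfl; intro ε _
    rw [← Finset.sum_sub_distrib]
    apply Finset.sum_congr rfl; intro δ _
    rw [Real.exp_add]; ring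
  rw [expand]
  -- reindex δ = ε == τ
  have reindex : ∀ ε : V → Bool, ∑ δ : V → Bool,
        (isingSpin (ε i) * isingSpin (ε j) - isingSpin (δ i) * isingSpin (δ j)) *
          Real.exp ((∑ x, ∑ y, K' x y * isingSpin (ε x) * isingSpin (ε y)) +
            (∑ x, ∑ y, K x y * isingSpin (δ x) * isingSpin (δ y)))
      = ∑ τ : V → Bool,
        (isingSpin (ε i) * isingSpin (ε j) *(1 - isingSpin (τ i) * isingSpin (τ j))) *
          Real.exp (∑ x, ∑ y, (K' x y + K x y * (isingSpin (τ x) * isingSpin (τ y))) *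
            isingSpin (ε x) * isingSpin (ε y)) := by
    intro ε
    have hb : Function.Bijective (fun (τ : V → Bool) => fun x => ε x == τ x) := by
      have hinv : Function.Involutive (fun (τ : V → Bool) => fun x => ε x == τ x) := by
        intro τ; funext x; simp only []; cases ε x <;> cases τ x <;> rfl
      exact hinv.bijective
    rw [← Fintype.sum_bijective _ hb _ _ (fun τ => rfl)]
    apply Finset.sum_congr rfl; intro τ _
    simp only [isingSpin_beq]
    have e1 : (∑ x, ∑ y, K x y * (isingSpin (ε x) * isingSpin (τ x)) *
        (isingSpin (ε y) * isingSpin (τ y)))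
        = ∑ x, ∑ y, (K x y * (isingSpin (τ x) * isingSpin (τ y))) *
            isingSpin (ε x) * isingSpin (ε y) := by
      apply Finset.sum_congr rfl; intro x _
      apply Finset.sum_congr rfl; intro y _; ring
    rw [e1, ← Finset.sum_add_distrib]
    have e2 : (∑ x, ((∑ y, K' x y * isingSpin (ε x) * isingSpin (ε y)) +
          ∑ y, (K x y * (isingSpin (τ x) * isingSpin (τ y))) * isingSpin (ε x) * isingSpin (ε y)))
        = ∑ x, ∑ y, (K' x y + K x y * (isingSpin (τ x) * isingSpin (τ y))) *
            isingSpin (ε x) * isingSpin (ε y) := by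
      apply Finset.sum_congr rfl; intro x _
      rw [← Finset.sum_add_distrib]
      apply Finset.sum_congr rfl; intro y _; ring
    rw [e2]; ring
  rw [Finset.sum_congr rfl fun ε _ => reindex ε]
  rw [Finset.sum_comm]
  apply Finset.sum_nonneg; intro τ _
  have hfac : 0 ≤ 1 - isingSpin (τ i) * isingSpin (τ j) := by
    rcases isingSpin_cases (τ i) with h1|h1 <;> rcases isingSpin_cases (τ j) with h2|h2 <;>
      rw [h1, h2] <;> norm_num
  have hM : ∀ x y, 0 ≤ K' x y + K x y * (isingSpin (τ x) * isingSpin (τ y)) := by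
    intro x y
    have habs : |K x y * (isingSpin (τ x) * isingSpin (τ y))| = |K x y| := by
      rw [abs_mul]
      rcases isingSpin_cases (τ x) with h1|h1 <;> rcases isingSpin_cases (τ y) with h2|h2 <;>
        rw [h1, h2] <;> norm_num
    have := neg_abs_le (K x y * (isingSpin (τ x) * isingSpin (τ y)))
    rw [habs] at this
    linarith [h x y]
  have := gks1' _ hM i j
  calc (0:ℝ) = (1 - isingSpin (τ i) * isingSpin (τ j)) * 0 := by ring
    _ ≤ (1 - isingSpin (τ i) * isingSpin (τ j)) *
        ∑ ε : V → Bool, isingSpin (ε i) * isingSpin (ε j) *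
          Real.exp (∑ x, ∑ y, (K' x y + K x y * (isingSpin (τ x) * isingSpin (τ y))) *
            isingSpin (ε x) * isingSpin (ε y)) := by
        exact mul_le_mul_of_nonneg_left this hfac
    _ = ∑ ε : V → Bool, (isingSpin (ε i) * isingSpin (ε j) *
          (1 - isingSpin (τ i) * isingSpin (τ j))) *
          Real.exp (∑ x, ∑ y, (K' x y + K x y * (isingSpin (τ x) * isingSpin (τ y))) *
            isingSpin (ε x) * isingSpin (ε y)) := by
        rw [Finset.mul_sum]; apply Finset.sum_congr rfl; intro ε _; ring
end

section
variable {V : Type*} [Fintype V] [DecidableEq V] {q : ℕ}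

def buildF (a b : Fin q) (ρ : V → Fin q) (ε : V → Bool) : V → Fin q :=
  fun x => if ρ x = a then (if ε x then a else b) else ρ x

noncomputable def wgtsite (a b c : Fin q) : ℝ := if c = b then 0 else if c = a then 1 else 1/2

noncomputable def usite (a b : Fin q) (c : Fin q) (s : Bool) : ℝ :=
  if c = a ∨ c = b then (if s then 1 else 0) else 1/2

lemma psi_eval (a b : Fin q) (c : Fin q) (t : Bool) :
    Equiv.swap ((a, false) : Fin q × Bool) (b, true) (c, t)
      = if c = a ∧ t = false then (b, true)
        else if c = b ∧ t = true then (a, false) else (c, t) := by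
  rw [Equiv.swap_apply_def]
  by_cases hca : c = a <;> by_cases hcb : c = b <;> cases t <;>
    simp_all [Prod.ext_iff]

lemma site1 (a b : Fin q) (hab : a ≠ b) (c : Fin q) (t : Bool) :
    usite a b (Equiv.swap ((a, false) : Fin q × Bool) (b, true) (c, t)).1
        (Equiv.swap ((a, false) : Fin q × Bool) (b, true) (c, t)).2
      = wgtsite a b c := by
  rw [psi_eval]
  by_cases hca : c = a
  · subst hca
    cases t <;> simp [usite, wgtsite, hab]
  · by_cases hcb : c = b
    · subst hcb
      cases t <;> simp [usite, wgtsite, hca, Ne.symm hab]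
    · cases t <;> simp [usite, wgtsite, hca, hcb]

lemma site2 (a b : Fin q) (c : Fin q) (t : Bool) (hcb : c ≠ b) :
    (Equiv.swap ((a, false) : Fin q × Bool) (b, true) (c, t)).1
      = if c = a then (if t then a else b) else c := by
  rw [psi_eval]
  by_cases hca : c = a
  · subst hca; cases t <;> simp [hcb]
  · cases t <;> simp [hca, hcb]

set_option linter.unreachableTactic false in
set_option linter.unusedTactic false in
lemma fib (a b : Fin q) (hab : a ≠ b) (G : (V → Fin q) → ℝ) :
    ∑ ρ : V → Fin q, ∑ ε : V → Bool,
        (∏ x, wgtsite a b (ρ x)) * G (buildF a b ρ ε) = ∑ σ : V → Fin q, G σ := by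
  classical
  set ψ := Equiv.swap ((a, false) : Fin q × Bool) (b, true) with hψ
  set E : ((V → Fin q) × (V → Bool)) ≃ ((V → Fin q) × (V → Bool)) :=
    (Equiv.arrowProdEquivProdArrow V (fun _ => Fin q) (fun _ => Bool)).symm.trans
      ((Equiv.piCongrRight (fun _ : V => ψ)).trans
        (Equiv.arrowProdEquivProdArrow V (fun _ => Fin q) (fun _ => Bool))) with hE
  have hE1 : ∀ p : (V → Fin q) × (V → Bool),
      E p = (fun x => (ψ (p.1 x, p.2 x)).1, fun x => (ψ (p.1 x, p.2 x)).2) := fun p => rfl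
  have key : ∀ p : (V → Fin q) × (V → Bool),
      (∏ x, usite a b ((E p).1 x) ((E p).2 x)) * G ((E p).1)
        = (∏ x, wgtsite a b (p.1 x)) * G (buildF a b p.1 p.2) := by
    rintro ⟨ρ, ε⟩
    rw [hE1]
    have hprod : (∏ x, usite a b ((ψ (ρ x, ε x)).1) ((ψ (ρ x, ε x)).2))
        = ∏ x, wgtsite a b (ρ x) :=
      Finset.prod_congr rfl fun x _ => site1 a b hab (ρ x) (ε x)
    simp only []
    rw [hprod]
    by_cases hz : ∀ x, ρ x ≠ b
    · have : (fun x => (ψ (ρ x, ε x)).1) = buildF a b ρ ε := by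
        funext x; exact site2 a b (ρ x) (ε x) (hz x)
      rw [this]
    · push_neg at hz
      obtain ⟨x₀, hx₀⟩ := hz
      have : (∏ x, wgtsite a b (ρ x)) = 0 :=
        Finset.prod_eq_zero (Finset.mem_univ x₀) (by simp [wgtsite, hx₀])
      rw [this, zero_mul, zero_mul]
  calc ∑ ρ : V → Fin q, ∑ ε : V → Bool,
          (∏ x, wgtsite a b (ρ x)) * G (buildF a b ρ ε)
      = ∑ p : (V → Fin q) × (V → Bool),
          (∏ x, wgtsite a b (p.1 x)) * G (buildF a b p.1 p.2) := by
        rw [Fintype.sum_prod_type]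
    _ = ∑ p : (V → Fin q) × (V → Bool),
          (∏ x, usite a b ((E p).1 x) ((E p).2 x)) * G ((E p).1) := by
        exact (Finset.sum_congr rfl fun p _ => (key p)).symm
    _ = ∑ p : (V → Fin q) × (V → Bool),
          (∏ x, usite a b (p.1 x) (p.2 x)) * G p.1 := by
        exact Equiv.sum_comp E (fun p => (∏ x, usite a b (p.1 x) (p.2 x)) * G p.1)
    _ = ∑ σ : V → Fin q, (∑ t : V → Bool, ∏ x, usite a b (σ x) (t x)) * G σ := by
        rw [Fintype.sum_prod_type]
        exact Finset.sum_congr rfl fun σ _ => by rw [Finset.sum_mul]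
    _ = ∑ σ : V → Fin q, G σ := by
        apply Finset.sum_congr rfl; intro σ _
        have : ∑ t : V → Bool, ∏ x, usite a b (σ x) (t x)
            = ∏ x, ∑ s : Bool, usite a b (σ x) s := (Fintype.prod_sum _).symm
        rw [this]
        have : ∀ x, ∑ s : Bool, usite a b (σ x) s = 1 := by
          intro x
          by_cases h : σ x = a ∨ σ x = b <;> simp [usite, h] <;> norm_num
        rw [Finset.prod_congr rfl fun x _ => this x]
        simp

def Gv {q : ℕ} (a b c : Fin q) : ℝ := (if c = a then 1 else 0) - (if c = b then 1 else 0)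
def Hv {q : ℕ} (a b c : Fin q) : ℝ := if c = a ∨ c = b then 1 else 0

lemma wgtsite_nonneg (a b c : Fin q) : 0 ≤ wgtsite a b c := by
  unfold wgtsite; split_ifs <;> norm_num

/-- energy decomposition on a fiber -/
lemma energy_decomp (J : V → V → ℝ) (a b : Fin q) (hab : a ≠ b)
    (ρ : V → Fin q) (hρ : ∀ x, ρ x ≠ b) (ε : V → Bool) :
    (∑ x, ∑ y, J x y * (if buildF a b ρ ε x = buildF a b ρ ε y then 1 else 0))
    = (∑ x, ∑ y, (if ρ x = a ∧ ρ y = a then J x y / 2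
          else J x y * (if ρ x = ρ y then 1 else 0)))
      + ∑ x, ∑ y, (if ρ x = a ∧ ρ y = a then J x y / 2 else 0) *
          isingSpin (ε x) * isingSpin (ε y) := by
  rw [← Finset.sum_add_distrib]
  apply Finset.sum_congr rfl; intro x _
  rw [← Finset.sum_add_distrib]
  apply Finset.sum_congr rfl; intro y _
  unfold buildF
  by_cases hx : ρ x = a <;> by_cases hy : ρ y = a
  · simp only [hx, hy, if_pos, and_self, if_true]
    cases hεx : ε x <;> cases hεy : ε y <;>
      simp [isingSpin, hab, Ne.symm hab] <;> ring
  · have h1 : ρ y ≠ a := hy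
    have h2 : ρ y ≠ b := hρ y
    cases ε x <;> simp [hx, hy, Ne.symm h1, Ne.symm h2]
  · have h1 : ρ x ≠ a := hx
    have h2 : ρ x ≠ b := hρ x
    cases ε y <;> simp [hx, hy, h1, h2]
  · simp [hx, hy]

lemma gv_build (a b : Fin q) (hab : a ≠ b) (ρ : V → Fin q) (hρ : ∀ x, ρ x ≠ b)
    (ε : V → Bool) (x : V) :
    Gv a b (buildF a b ρ ε x) = if ρ x = a then isingSpin (ε x) else 0 := by
  unfold Gv buildF
  by_cases hx : ρ x = a
  · simp only [hx, if_true]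
    cases ε x <;> simp [isingSpin, hab, Ne.symm hab]
  · simp [hx, hρ x]

lemma hv_build (a b : Fin q) (ρ : V → Fin q) (hρ : ∀ x, ρ x ≠ b)
    (ε : V → Bool) (x : V) :
    Hv a b (buildF a b ρ ε x) = if ρ x = a then 1 else 0 := by
  unfold Hv buildF
  by_cases hx : ρ x = a
  · simp only [hx, if_true]
    cases ε x <;> simp
  · simp [hx, hρ x]

lemma perpair (J : V → V → ℝ) (i j : V) (a b : Fin q) (hab : a ≠ b) :
    (∑ σ : V → Fin q,
        Real.exp (∑ x, ∑ y, J x y * (if σ x = σ y then 1 else 0)) *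
          (Gv a b (σ i) * Gv a b (σ j)))
      * (∑ ε : V → Bool,
          Real.exp (∑ x, ∑ y, (1/2) * |J x y| * isingSpin (ε x) * isingSpin (ε y)))
    ≤ (∑ ε : V → Bool,
          Real.exp (∑ x, ∑ y, (1/2) * |J x y| * isingSpin (ε x) * isingSpin (ε y)) *
            (isingSpin (ε i) * isingSpin (ε j)))
      * (∑ σ : V → Fin q,
          Real.exp (∑ x, ∑ y, J x y * (if σ x = σ y then 1 else 0)) *
            (Hv a b (σ i) * Hv a b (σ j))) := by
  classical
  set D := (∑ ε : V → Bool,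
      Real.exp (∑ x, ∑ y, (1/2) * |J x y| * isingSpin (ε x) * isingSpin (ε y))) with hD
  set C := (∑ ε : V → Bool,
      Real.exp (∑ x, ∑ y, (1/2) * |J x y| * isingSpin (ε x) * isingSpin (ε y)) *
        (isingSpin (ε i) * isingSpin (ε j))) with hC
  rw [← fib a b hab (fun σ =>
      Real.exp (∑ x, ∑ y, J x y * (if σ x = σ y then 1 else 0)) *
        (Gv a b (σ i) * Gv a b (σ j))),
     ← fib a b hab (fun σ =>
      Real.exp (∑ x, ∑ y, J x y * (if σ x = σ y then 1 else 0)) *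
        (Hv a b (σ i) * Hv a b (σ j)))]
  rw [Finset.sum_mul, Finset.mul_sum]
  apply Finset.sum_le_sum
  intro ρ _
  rw [← Finset.mul_sum, ← Finset.mul_sum]
  set W := ∏ x, wgtsite a b (ρ x) with hW
  have hWnn : 0 ≤ W := Finset.prod_nonneg fun x _ => wgtsite_nonneg a b (ρ x)
  by_cases hρ : ∀ x, ρ x ≠ b
  · -- inner inequality
    have inner :
        (∑ ε : V → Bool,
            Real.exp (∑ x, ∑ y, J x y *
              (if buildF a b ρ ε x = buildF a b ρ ε y then 1 else 0)) *
              (Gv a b (buildF a b ρ ε i) * Gv a b (buildF a b ρ ε j))) * D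
        ≤ C * (∑ ε : V → Bool,
            Real.exp (∑ x, ∑ y, J x y *
              (if buildF a b ρ ε x = buildF a b ρ ε y then 1 else 0)) *
              (Hv a b (buildF a b ρ ε i) * Hv a b (buildF a b ρ ε j))) := by
      set K : V → V → ℝ := fun x y => if ρ x = a ∧ ρ y = a then J x y / 2 else 0 with hK
      set c₀ : ℝ := ∑ x, ∑ y, (if ρ x = a ∧ ρ y = a then J x y / 2
          else J x y * (if ρ x = ρ y then 1 else 0)) with hc₀
      have hw : ∀ ε : V → Bool,
          Real.exp (∑ x, ∑ y, J x y *
            (if buildF a b ρ ε x = buildF a b ρ ε y then 1 else 0))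
          = Real.exp c₀ *
            Real.exp (∑ x, ∑ y, K x y * isingSpin (ε x) * isingSpin (ε y)) := by
        intro ε
        rw [energy_decomp J a b hab ρ hρ ε, Real.exp_add]
      by_cases hij : ρ i = a ∧ ρ j = a
      · have hSg : (∑ ε : V → Bool,
            Real.exp (∑ x, ∑ y, J x y *
              (if buildF a b ρ ε x = buildF a b ρ ε y then 1 else 0)) *
              (Gv a b (buildF a b ρ ε i) * Gv a b (buildF a b ρ ε j)))
            = Real.exp c₀ * ∑ ε : V → Bool,
                isingSpin (ε i) * isingSpin (ε j) *
                  Real.exp (∑ x, ∑ y, K x y * isingSpin (ε x) * isingSpin (ε y)) := by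
          rw [Finset.mul_sum]
          apply Finset.sum_congr rfl; intro ε _
          rw [hw ε, gv_build a b hab ρ hρ ε i, gv_build a b hab ρ hρ ε j,
            if_pos hij.1, if_pos hij.2]
          ring
        have hSh : (∑ ε : V → Bool,
            Real.exp (∑ x, ∑ y, J x y *
              (if buildF a b ρ ε x = buildF a b ρ ε y then 1 else 0)) *
              (Hv a b (buildF a b ρ ε i) * Hv a b (buildF a b ρ ε j)))
            = Real.exp c₀ * ∑ ε : V → Bool,
                Real.exp (∑ x, ∑ y, K x y * isingSpin (ε x) * isingSpin (ε y)) := by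
          rw [Finset.mul_sum]
          apply Finset.sum_congr rfl; intro ε _
          rw [hw ε, hv_build a b ρ hρ ε i, hv_build a b ρ hρ ε j,
            if_pos hij.1, if_pos hij.2]
          ring
        rw [hSg, hSh]
        have habs : ∀ x y, |K x y| ≤ (1/2) * |J x y| := by
          intro x y
          by_cases h : ρ x = a ∧ ρ y = a
          · rw [hK]; simp only [if_pos h]
            exact le_of_eq (by rw [abs_div, abs_two]; ring)
          · rw [hK]; simp only [if_neg h, abs_zero]; positivity
        have hCeq : C = ∑ ε : V → Bool,
            isingSpin (ε i) * isingSpin (ε j) *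
              Real.exp (∑ x, ∑ y, (1/2) * |J x y| * isingSpin (ε x) * isingSpin (ε y)) := by
          rw [hC]; apply Finset.sum_congr rfl; intro ε _; ring
        have hg := griffiths_comparison K (fun x y => (1/2) * |J x y|) habs i j
        rw [← hCeq] at hg
        calc Real.exp c₀ * (∑ ε : V → Bool,
                isingSpin (ε i) * isingSpin (ε j) *
                  Real.exp (∑ x, ∑ y, K x y * isingSpin (ε x) * isingSpin (ε y))) * D
            = Real.exp c₀ * ((∑ ε : V → Bool,
                isingSpin (ε i) * isingSpin (ε j) *
                  Real.exp (∑ x, ∑ y, K x y * isingSpin (ε x) * isingSpin (ε y))) * D) := by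
              ring
          _ ≤ Real.exp c₀ * (C * ∑ ε : V → Bool,
                Real.exp (∑ x, ∑ y, K x y * isingSpin (ε x) * isingSpin (ε y))) := by
              apply mul_le_mul_of_nonneg_left _ (Real.exp_nonneg c₀)
              exact hg
          _ = C * (Real.exp c₀ * ∑ ε : V → Bool,
                Real.exp (∑ x, ∑ y, K x y * isingSpin (ε x) * isingSpin (ε y))) := by
              ring
      · -- not both in S : both sums vanish
        have hzg : ∀ ε : V → Bool,
            Gv a b (buildF a b ρ ε i) * Gv a b (buildF a b ρ ε j) = 0 := by
          intro ε
          rw [gv_build a b hab ρ hρ ε i, gv_build a b hab ρ hρ ε j]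
          rcases not_and_or.mp hij with h | h <;> simp [h]
        have hzh : ∀ ε : V → Bool,
            Hv a b (buildF a b ρ ε i) * Hv a b (buildF a b ρ ε j) = 0 := by
          intro ε
          rw [hv_build a b ρ hρ ε i, hv_build a b ρ hρ ε j]
          rcases not_and_or.mp hij with h | h <;> simp [h]
        have hZg : (∑ ε : V → Bool,
            Real.exp (∑ x, ∑ y, J x y *
              (if buildF a b ρ ε x = buildF a b ρ ε y then 1 else 0)) *
              (Gv a b (buildF a b ρ ε i) * Gv a b (buildF a b ρ ε j))) = 0 :=
          Finset.sum_eq_zero fun ε _ => by rw [hzg ε, mul_zero]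
        have hZh : (∑ ε : V → Bool,
            Real.exp (∑ x, ∑ y, J x y *
              (if buildF a b ρ ε x = buildF a b ρ ε y then 1 else 0)) *
              (Hv a b (buildF a b ρ ε i) * Hv a b (buildF a b ρ ε j))) = 0 :=
          Finset.sum_eq_zero fun ε _ => by rw [hzh ε, mul_zero]
        rw [hZg, hZh]
        simp
    calc W * (∑ ε : V → Bool,
            Real.exp (∑ x, ∑ y, J x y *
              (if buildF a b ρ ε x = buildF a b ρ ε y then 1 else 0)) *
              (Gv a b (buildF a b ρ ε i) * Gv a b (buildF a b ρ ε j))) * D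
        = W * ((∑ ε : V → Bool,
            Real.exp (∑ x, ∑ y, J x y *
              (if buildF a b ρ ε x = buildF a b ρ ε y then 1 else 0)) *
              (Gv a b (buildF a b ρ ε i) * Gv a b (buildF a b ρ ε j))) * D) := by ring
      _ ≤ W * (C * (∑ ε : V → Bool,
            Real.exp (∑ x, ∑ y, J x y *
              (if buildF a b ρ ε x = buildF a b ρ ε y then 1 else 0)) *
              (Hv a b (buildF a b ρ ε i) * Hv a b (buildF a b ρ ε j)))) :=
          mul_le_mul_of_nonneg_left inner hWnn
      _ = C * (W * (∑ ε : V → Bool,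
            Real.exp (∑ x, ∑ y, J x y *
              (if buildF a b ρ ε x = buildF a b ρ ε y then 1 else 0)) *
              (Hv a b (buildF a b ρ ε i) * Hv a b (buildF a b ρ ε j)))) := by ring
  · push_neg at hρ
    obtain ⟨x₀, hx₀⟩ := hρ
    have : W = 0 := Finset.prod_eq_zero (Finset.mem_univ x₀) (by simp [wgtsite, hx₀])
    rw [this]
    simp
end

lemma pairsum {q : ℕ} (c d : Fin q) :
    ∑ a : Fin q, ∑ b : Fin q, Gv a b c * Gv a b d
      = 2 * ((q:ℝ) * (if c = d then 1 else 0) - 1) := by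
  have hsum1 : ∀ e : Fin q, (∑ a : Fin q, (if e = a then (1:ℝ) else 0)) = 1 := by
    intro e; simp
  have hsum2 : ∀ e f : Fin q,
      (∑ a : Fin q, (if e = a then (1:ℝ) else 0) * (if f = a then 1 else 0))
        = if e = f then 1 else 0 := by
    intro e f
    have h : ∀ a : Fin q, (if e = a then (1:ℝ) else 0) * (if f = a then 1 else 0)
        = if e = a then (if f = a then (1:ℝ) else 0) else 0 := by
      intro a; by_cases h : e = a <;> simp [h]
    rw [Finset.sum_congr rfl fun a _ => h a, Finset.sum_ite_eq]
    simp only [Finset.mem_univ, if_true]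
    by_cases h : e = f
    · subst h; simp
    · simp [h, Ne.symm h]
  have expand : ∀ a b : Fin q, Gv a b c * Gv a b d
      = (((if c = a then (1:ℝ) else 0) * (if d = a then 1 else 0)
          + (if c = b then (1:ℝ) else 0) * (if d = b then 1 else 0))
        - ((if c = a then (1:ℝ) else 0) * (if d = b then 1 else 0)
          + (if c = b then (1:ℝ) else 0) * (if d = a then 1 else 0))) := by
    intro a b; simp only [Gv]; ring
  rw [Finset.sum_congr rfl fun a _ => Finset.sum_congr rfl fun b _ => expand a b]
  rw [Finset.sum_congr rfl fun a (_ : a ∈ univ) => Finset.sum_sub_distrib _ _]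
  rw [Finset.sum_sub_distrib]
  rw [Finset.sum_congr rfl fun a (_ : a ∈ univ) => Finset.sum_add_distrib]
  rw [Finset.sum_add_distrib]
  rw [Finset.sum_congr rfl fun a (_ : a ∈ univ) => Finset.sum_add_distrib]
  rw [Finset.sum_add_distrib]
  have e1 : (∑ a : Fin q, ∑ _b : Fin q,
      (if c = a then (1:ℝ) else 0) * (if d = a then 1 else 0)) = (q:ℝ) * (if c = d then 1 else 0) := by
    rw [Finset.sum_congr rfl fun a (_ : a ∈ univ) => Finset.sum_const _]
    simp only [Finset.card_univ, Fintype.card_fin, nsmul_eq_mul]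
    rw [← Finset.mul_sum, hsum2 c d]
  have e2 : (∑ a : Fin q, ∑ b : Fin q,
      (if c = b then (1:ℝ) else 0) * (if d = b then 1 else 0)) = (q:ℝ) * (if c = d then 1 else 0) := by
    rw [Finset.sum_congr rfl fun a (_ : a ∈ univ) => hsum2 c d]
    simp [Finset.sum_const, Finset.card_univ]
  have e3 : (∑ a : Fin q, ∑ b : Fin q,
      (if c = a then (1:ℝ) else 0) * (if d = b then 1 else 0)) = 1 := by
    have : ∀ a : Fin q, (∑ b : Fin q, (if c = a then (1:ℝ) else 0) * (if d = b then 1 else 0))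
        = (if c = a then (1:ℝ) else 0) := by
      intro a; rw [← Finset.mul_sum, hsum1 d, mul_one]
    rw [Finset.sum_congr rfl fun a _ => this a, hsum1 c]
  have e4 : (∑ a : Fin q, ∑ b : Fin q,
      (if c = b then (1:ℝ) else 0) * (if d = a then 1 else 0)) = 1 := by
    have : ∀ a : Fin q, (∑ b : Fin q, (if c = b then (1:ℝ) else 0) * (if d = a then 1 else 0))
        = (if d = a then (1:ℝ) else 0) := by
      intro a; rw [← Finset.sum_mul, hsum1 c, one_mul]
    rw [Finset.sum_congr rfl fun a _ => this a, hsum1 d]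
  rw [e1, e2, e3, e4]
  ring


end Auxiliary

/-- comparison-to-Ising bound for an arbitrary Potts model:
`⟨(q δ_{σ_i,σ_j} − 1)/(q−1)⟩_{Potts,J} ≤ (q/2) ⟨ε_i ε_j⟩_{Ising,|J|/2}`. -/
theorem potts_comparison_to_ising
    {V : Type*} [Fintype V] [DecidableEq V]
    (q : ℕ) (hq : 2 ≤ q) (J : V → V → ℝ) (hsymm : ∀ i j, J i j = J j i)
    (i j : V) :
    (∑ σ : V → Fin q,
        Real.exp (∑ x : V, ∑ y : V, J x y * (if σ x = σ y then 1 else 0)) *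
          (((q : ℝ) * (if σ i = σ j then 1 else 0) - 1) / ((q : ℝ) - 1)))
      / (∑ σ : V → Fin q,
        Real.exp (∑ x : V, ∑ y : V, J x y * (if σ x = σ y then 1 else 0)))
    ≤ ((q : ℝ) / 2) *
      ((∑ ε : V → Bool,
          Real.exp (∑ x : V, ∑ y : V, (1 / 2) * |J x y| * isingSpin (ε x) * isingSpin (ε y)) *
            (isingSpin (ε i) * isingSpin (ε j)))
        / (∑ ε : V → Bool,
          Real.exp (∑ x : V, ∑ y : V, (1 / 2) * |J x y| * isingSpin (ε x) * isingSpin (ε y)))) := by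
  classical
  have hQ : (2:ℝ) ≤ (q:ℝ) := by exact_mod_cast hq
  have hQ1 : (0:ℝ) < (q:ℝ) - 1 := by linarith
  have hne : ((q:ℝ) - 1) ≠ 0 := ne_of_gt hQ1
  have hFq : Nonempty (Fin q) := ⟨⟨0, by omega⟩⟩
  set w : (V → Fin q) → ℝ := fun σ =>
    Real.exp (∑ x : V, ∑ y : V, J x y * (if σ x = σ y then 1 else 0)) with hw
  set B : ℝ := ∑ σ : V → Fin q, w σ with hB
  set D : ℝ := ∑ ε : V → Bool,
    Real.exp (∑ x : V, ∑ y : V, (1/2) * |J x y| * isingSpin (ε x) * isingSpin (ε y)) with hDdef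
  set C : ℝ := ∑ ε : V → Bool,
    Real.exp (∑ x : V, ∑ y : V, (1/2) * |J x y| * isingSpin (ε x) * isingSpin (ε y)) *
      (isingSpin (ε i) * isingSpin (ε j)) with hCdef
  set A : ℝ := ∑ σ : V → Fin q,
    w σ * (((q : ℝ) * (if σ i = σ j then 1 else 0) - 1) / ((q : ℝ) - 1)) with hA
  have hBpos : 0 < B := Finset.sum_pos (fun σ _ => Real.exp_pos _) Finset.univ_nonempty
  have hDpos : 0 < D := Finset.sum_pos (fun ε _ => Real.exp_pos _) Finset.univ_nonempty
  have hCnn : 0 ≤ C := by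
    have h := gks1' (fun x y => (1/2) * |J x y|) (fun x y => by positivity) i j
    have hCC : C = ∑ ε : V → Bool, isingSpin (ε i) * isingSpin (ε j) *
        Real.exp (∑ x, ∑ y, (1/2) * |J x y| * isingSpin (ε x) * isingSpin (ε y)) := by
      rw [hCdef]; exact Finset.sum_congr rfl fun ε _ => by ring
    rw [hCC]; exact h
  set T : Fin q → Fin q → ℝ := fun a b => ∑ σ : V → Fin q, w σ * (Gv a b (σ i) * Gv a b (σ j))
    with hT
  have hAeq : A = (1 / (2 * ((q:ℝ) - 1))) * ∑ a : Fin q, ∑ b : Fin q, T a b := by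
    have s1 : ∑ a : Fin q, ∑ b : Fin q, T a b
        = ∑ a : Fin q, ∑ σ : V → Fin q, ∑ b : Fin q, w σ * (Gv a b (σ i) * Gv a b (σ j)) := by
      simp only [hT]
      exact Finset.sum_congr rfl fun a _ => Finset.sum_comm
    have s2 : ∑ a : Fin q, ∑ σ : V → Fin q, ∑ b : Fin q, w σ * (Gv a b (σ i) * Gv a b (σ j))
        = ∑ σ : V → Fin q, ∑ a : Fin q, ∑ b : Fin q, w σ * (Gv a b (σ i) * Gv a b (σ j)) :=
      Finset.sum_comm
    rw [s1, s2, Finset.mul_sum, hA]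
    apply Finset.sum_congr rfl; intro σ _
    have inner : ∑ a : Fin q, ∑ b : Fin q, w σ * (Gv a b (σ i) * Gv a b (σ j))
        = w σ * (2 * ((q:ℝ) * (if σ i = σ j then 1 else 0) - 1)) := by
      rw [← pairsum (σ i) (σ j), Finset.mul_sum]
      exact Finset.sum_congr rfl fun a _ => by rw [Finset.mul_sum]
    rw [inner]
    field_simp
  set U : Fin q → Fin q → ℝ := fun a b => ∑ σ : V → Fin q,
    w σ * (if a = b then 0 else Hv a b (σ i) * Hv a b (σ j)) with hU
  have hpair : ∀ a b : Fin q, T a b * D ≤ C * U a b := by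
    intro a b
    by_cases hab : a = b
    · subst hab
      have hT0 : T a a = 0 := by
        simp only [hT]
        apply Finset.sum_eq_zero; intro σ _
        have : Gv a a (σ i) = 0 := by simp [Gv]
        rw [this]; simp
      have hU0 : U a a = 0 := by
        simp only [hU]; apply Finset.sum_eq_zero; intro σ _; simp
      rw [hT0, hU0]; simp
    · have hp := perpair J i j a b hab
      have hUeq : U a b = ∑ σ : V → Fin q, w σ * (Hv a b (σ i) * Hv a b (σ j)) := by
        simp only [hU]
        exact Finset.sum_congr rfl fun σ _ => by rw [if_neg hab]
      rw [hUeq]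
      exact hp
  have hUsum : ∑ a : Fin q, ∑ b : Fin q, U a b ≤ (q:ℝ) * ((q:ℝ) - 1) * B := by
    have s1 : ∑ a : Fin q, ∑ b : Fin q, U a b
        = ∑ σ : V → Fin q, ∑ a : Fin q, ∑ b : Fin q,
            w σ * (if a = b then 0 else Hv a b (σ i) * Hv a b (σ j)) := by
      simp only [hU]
      calc ∑ a : Fin q, ∑ b : Fin q, ∑ σ : V → Fin q,
              w σ * (if a = b then 0 else Hv a b (σ i) * Hv a b (σ j))
          = ∑ a : Fin q, ∑ σ : V → Fin q, ∑ b : Fin q,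
              w σ * (if a = b then 0 else Hv a b (σ i) * Hv a b (σ j)) :=
            Finset.sum_congr rfl fun a _ => Finset.sum_comm
        _ = ∑ σ : V → Fin q, ∑ a : Fin q, ∑ b : Fin q,
              w σ * (if a = b then 0 else Hv a b (σ i) * Hv a b (σ j)) := Finset.sum_comm
    rw [s1]
    have perσ : ∀ σ : V → Fin q, ∑ a : Fin q, ∑ b : Fin q,
        w σ * (if a = b then 0 else Hv a b (σ i) * Hv a b (σ j))
        ≤ w σ * ((q:ℝ) * ((q:ℝ) - 1)) := by
      intro σ
      have hptw : ∀ a b : Fin q, (if a = b then (0:ℝ) else Hv a b (σ i) * Hv a b (σ j))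
          ≤ (if a = b then (0:ℝ) else 1) := by
        intro a b
        by_cases hab : a = b
        · simp [hab]
        · rw [if_neg hab, if_neg hab]
          have h1 : Hv a b (σ i) ≤ 1 := by unfold Hv; split_ifs <;> norm_num
          have h2 : Hv a b (σ j) ≤ 1 := by unfold Hv; split_ifs <;> norm_num
          have h3 : 0 ≤ Hv a b (σ i) := by unfold Hv; split_ifs <;> norm_num
          have h4 : 0 ≤ Hv a b (σ j) := by unfold Hv; split_ifs <;> norm_num
          calc Hv a b (σ i) * Hv a b (σ j) ≤ 1 * 1 := mul_le_mul h1 h2 h4 (by norm_num)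
            _ = 1 := by norm_num
      have hcount : ∑ a : Fin q, ∑ b : Fin q, (if a = b then (0:ℝ) else 1)
          = (q:ℝ) * ((q:ℝ) - 1) := by
        have hrow : ∀ a : Fin q, ∑ b : Fin q, (if a = b then (0:ℝ) else 1) = (q:ℝ) - 1 := by
          intro a
          have : ∀ b : Fin q, (if a = b then (0:ℝ) else 1)
              = 1 - (if a = b then 1 else 0) := by
            intro b; split_ifs <;> norm_num
          rw [Finset.sum_congr rfl fun b _ => this b, Finset.sum_sub_distrib]
          simp [Finset.card_univ]
        rw [Finset.sum_congr rfl fun a _ => hrow a]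
        simp [Finset.card_univ]; ring
      calc ∑ a : Fin q, ∑ b : Fin q,
              w σ * (if a = b then 0 else Hv a b (σ i) * Hv a b (σ j))
          = w σ * ∑ a : Fin q, ∑ b : Fin q,
              (if a = b then (0:ℝ) else Hv a b (σ i) * Hv a b (σ j)) := by
            rw [Finset.mul_sum]
            exact Finset.sum_congr rfl fun a _ => by rw [Finset.mul_sum]
        _ ≤ w σ * ((q:ℝ) * ((q:ℝ) - 1)) := by
            apply mul_le_mul_of_nonneg_left _ (Real.exp_nonneg _)
            rw [← hcount]
            exact Finset.sum_le_sum fun a _ => Finset.sum_le_sum fun b _ => hptw a b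
    calc ∑ σ : V → Fin q, ∑ a : Fin q, ∑ b : Fin q,
            w σ * (if a = b then 0 else Hv a b (σ i) * Hv a b (σ j))
        ≤ ∑ σ : V → Fin q, w σ * ((q:ℝ) * ((q:ℝ) - 1)) := Finset.sum_le_sum fun σ _ => perσ σ
      _ = (q:ℝ) * ((q:ℝ) - 1) * B := by rw [← Finset.sum_mul, hB, mul_comm]
  have key : A * D ≤ ((q:ℝ)/2) * C * B := by
    rw [hAeq]
    have h1 : (∑ a : Fin q, ∑ b : Fin q, T a b) * D ≤ C * ∑ a : Fin q, ∑ b : Fin q, U a b := by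
      rw [Finset.sum_mul, Finset.mul_sum]
      apply Finset.sum_le_sum; intro a _
      rw [Finset.sum_mul, Finset.mul_sum]
      exact Finset.sum_le_sum fun b _ => hpair a b
    have h2 : C * (∑ a : Fin q, ∑ b : Fin q, U a b) ≤ C * ((q:ℝ) * ((q:ℝ) - 1) * B) :=
      mul_le_mul_of_nonneg_left hUsum hCnn
    calc (1 / (2 * ((q:ℝ) - 1))) * (∑ a : Fin q, ∑ b : Fin q, T a b) * D
        = (1 / (2 * ((q:ℝ) - 1))) * ((∑ a : Fin q, ∑ b : Fin q, T a b) * D) := by ring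
      _ ≤ (1 / (2 * ((q:ℝ) - 1))) * (C * ((q:ℝ) * ((q:ℝ) - 1) * B)) := by
          apply mul_le_mul_of_nonneg_left (le_trans h1 h2) (by positivity)
      _ = ((q:ℝ)/2) * C * B := by field_simp
  rw [← mul_div_assoc, div_le_div_iff₀ hBpos hDpos]
  exact key
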